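/- Let O ⊂ R^d be a bounded measurable set, α : O → R^{d×d} measurable symmetric with ᾱ|x|² ≥ x·α(y)x ≥ α̲|x|² for constants 0 < α̲ ≤ ᾱ and all y ∈ O, x ∈ R^d, and β > 0 a constant. Then the map A_β : (L^3(O))^d → (L^{3/2}(O))^d defined pointwise by A_β(u) = (α + β|u|)u is strictly monotone: ∫_O (A_β(u) − A_β(w))·(u−w) dx ≥ α̲‖u−w‖²_{L^2} + (β/2)‖u−w‖³_{L^3}, with equality zero only if u = w. -/

import Mathlib

open MeasureTheory RealInnerProductSpace
open scoped ENNReal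

lemma aux_pointwise {E : Type*} [NormedAddCommGroup E] [InnerProductSpace ℝ E] (a b : E) :
    (1/2) * ‖a - b‖ ^ 3 ≤ ⟪‖a‖ • a - ‖b‖ • b, a - b⟫ := by
  have h1 : ⟪‖a‖ • a - ‖b‖ • b, a - b⟫
      = ‖a‖ ^ 3 + ‖b‖ ^ 3 - (‖a‖ + ‖b‖) * ⟪a, b⟫ := by
    simp only [inner_sub_left, inner_sub_right, real_inner_smul_left,
      real_inner_self_eq_norm_sq, real_inner_comm b a]
    ring
  have hn : ‖a - b‖ ^ 2 = ‖a‖ ^ 2 - 2 * ⟪a, b⟫ + ‖b‖ ^ 2 := by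
    exact norm_sub_sq_real a b
  have htri : ‖a - b‖ ≤ ‖a‖ + ‖b‖ := norm_sub_le a b
  have hr : (0:ℝ) ≤ ‖a - b‖ := norm_nonneg _
  have ha : (0:ℝ) ≤ ‖a‖ := norm_nonneg _
  have hb : (0:ℝ) ≤ ‖b‖ := norm_nonneg _
  rw [h1]
  nlinarith [mul_nonneg (sub_nonneg.2 htri) (sq_nonneg ‖a - b‖),
    mul_nonneg (sq_nonneg (‖a‖ - ‖b‖)) (add_nonneg ha hb), sq_nonneg (‖a - b‖)]

lemma aux_int_pow {X : Type*} [MeasurableSpace X] {μ : Measure X} {E : Type*}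
    [NormedAddCommGroup E] {f : X → E} {n : ℕ} (hn : n ≠ 0) (hf : MemLp f (n : ℝ≥0∞) μ) :
    Integrable (fun a => ‖f a‖ ^ n) μ := by
  have h := hf.integrable_norm_rpow (by exact_mod_cast Nat.cast_ne_zero.2 hn) (by simp)
  refine h.congr (Filter.Eventually.of_forall fun a => ?_)
  simp [Real.rpow_natCast]

lemma aux_eLp_pow {X : Type*} [MeasurableSpace X] {μ : Measure X} {E : Type*}
    [NormedAddCommGroup E] {f : X → E} {n : ℕ} (hn : n ≠ 0) (hf : MemLp f (n : ℝ≥0∞) μ) :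
    (eLpNorm f (n : ℝ≥0∞) μ).toReal ^ n = ∫ a, ‖f a‖ ^ n ∂μ := by
  have h0 : ((n : ℝ≥0∞)) ≠ 0 := by exact_mod_cast Nat.cast_ne_zero.2 hn
  rw [hf.eLpNorm_eq_integral_rpow_norm h0 (by simp)]
  have ht : ((n : ℝ≥0∞)).toReal = (n : ℝ) := by simp
  rw [ht]
  have hI : 0 ≤ ∫ a, ‖f a‖ ^ (n : ℝ) ∂μ :=
    integral_nonneg fun a => Real.rpow_nonneg (norm_nonneg _) _
  rw [ENNReal.toReal_ofReal (Real.rpow_nonneg hI _)]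
  rw [← Real.rpow_natCast ((∫ a, ‖f a‖ ^ (n:ℝ) ∂μ) ^ (n:ℝ)⁻¹) n, ← Real.rpow_mul hI,
    inv_mul_cancel₀ (by exact_mod_cast hn), Real.rpow_one]
  simp [Real.rpow_natCast]


/-- With a uniformly elliptic symmetric coefficient `α` and constant `β > 0`, the
Darcy–Forchheimer operator `A_β(u) = (α + β|u|)u` is strictly monotone:
`∫ (A_β(u) − A_β(w))·(u−w) ≥ α̲‖u−w‖²_{L²} + (β/2)‖u−w‖³_{L³}`,
with the integral vanishing only if `u = w` a.e. -/
theorem darcyForchheimer_strictly_monotone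
    (d : ℕ) (O : Set (EuclideanSpace ℝ (Fin d)))
    (hOm : MeasurableSet O) (hObdd : Bornology.IsBounded O)
    (α : EuclideanSpace ℝ (Fin d) → (EuclideanSpace ℝ (Fin d) →L[ℝ] EuclideanSpace ℝ (Fin d)))
    (hαmeas : Measurable fun y => α y)
    (hαsymm : ∀ y ∈ O, ∀ x x' : EuclideanSpace ℝ (Fin d), ⟪α y x, x'⟫ = ⟪x, α y x'⟫)
    (αlow αhigh : ℝ) (hαlow : 0 < αlow) (hαle : αlow ≤ αhigh)
    (hell : ∀ y ∈ O, ∀ x : EuclideanSpace ℝ (Fin d),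
      αlow * ‖x‖ ^ 2 ≤ ⟪x, α y x⟫ ∧ ⟪x, α y x⟫ ≤ αhigh * ‖x‖ ^ 2)
    (β : ℝ) (hβ : 0 < β)
    (u w : EuclideanSpace ℝ (Fin d) → EuclideanSpace ℝ (Fin d))
    (hu : MemLp u 3 (volume.restrict O)) (hw : MemLp w 3 (volume.restrict O)) :
    αlow * (eLpNorm (u - w) 2 (volume.restrict O)).toReal ^ 2 +
        (β / 2) * (eLpNorm (u - w) 3 (volume.restrict O)).toReal ^ 3 ≤
      (∫ x, ⟪(α x (u x) + β • (‖u x‖ • u x)) - (α x (w x) + β • (‖w x‖ • w x)),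
          u x - w x⟫ ∂(volume.restrict O)) ∧
    ((∫ x, ⟪(α x (u x) + β • (‖u x‖ • u x)) - (α x (w x) + β • (‖w x‖ • w x)),
          u x - w x⟫ ∂(volume.restrict O)) = 0 → u =ᵐ[volume.restrict O] w) := by
  set μ := volume.restrict O with hμdef
  haveI : IsFiniteMeasure μ := by
    refine ⟨?_⟩
    rw [hμdef, Measure.restrict_apply_univ]
    exact hObdd.measure_lt_top
  -- basic membership facts
  have h23 : ((2:ℕ) : ℝ≥0∞) = (2 : ℝ≥0∞) := by norm_num
  have h33 : ((3:ℕ) : ℝ≥0∞) = (3 : ℝ≥0∞) := by norm_num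
  have huw3 : MemLp (u - w) 3 μ := hu.sub hw
  have huw2 : MemLp (u - w) 2 μ := huw3.mono_exponent (by norm_num)
  have hi2 : Integrable (fun x => ‖u x - w x‖ ^ 2) μ := by
    have := aux_int_pow (f := u - w) (n := 2) (by norm_num) (by rwa [h23])
    exact this.congr (Filter.Eventually.of_forall fun x => by simp [Pi.sub_apply])
  have hi3 : Integrable (fun x => ‖u x - w x‖ ^ 3) μ := by
    have := aux_int_pow (f := u - w) (n := 3) (by norm_num) (by rwa [h33])
    exact this.congr (Filter.Eventually.of_forall fun x => by simp [Pi.sub_apply])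
  have hsum3 : MemLp (fun x => ‖u x‖ + ‖w x‖) 3 μ := hu.norm.add hw.norm
  have hiG : Integrable (fun x => (‖u x‖ + ‖w x‖) ^ 3) μ := by
    have := aux_int_pow (f := fun x => ‖u x‖ + ‖w x‖) (n := 3) (by norm_num) (by rwa [h33])
    refine this.congr (Filter.Eventually.of_forall fun x => ?_)
    simp only [Real.norm_eq_abs, abs_of_nonneg (add_nonneg (norm_nonneg (u x)) (norm_nonneg (w x)))]
  -- the integrand
  set F : EuclideanSpace ℝ (Fin d) → ℝ := fun x =>
    ⟪(α x (u x) + β • (‖u x‖ • u x)) - (α x (w x) + β • (‖w x‖ • w x)), u x - w x⟫ with hFdef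
  -- measurability of F
  have hαae : AEStronglyMeasurable α μ := hαmeas.aestronglyMeasurable
  have happ : ∀ v : EuclideanSpace ℝ (Fin d) → EuclideanSpace ℝ (Fin d),
      AEStronglyMeasurable v μ → AEStronglyMeasurable (fun x => α x (v x)) μ := fun v hv =>
    isBoundedBilinearMap_apply.continuous.comp_aestronglyMeasurable (hαae.prodMk hv)
  have hFm : AEStronglyMeasurable F μ := by
    refine AEStronglyMeasurable.inner ?_ (hu.1.sub hw.1)
    exact (((happ u hu.1).add ((hu.1.norm.smul hu.1).const_smul β)).sub
      ((happ w hw.1).add ((hw.1.norm.smul hw.1).const_smul β)))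
  -- a.e. pointwise identity and bounds
  have haeO : ∀ᵐ x ∂μ, x ∈ O := ae_restrict_mem hOm
  have hFeq : ∀ x, F x = ⟪α x (u x - w x), u x - w x⟫
      + β * ⟪‖u x‖ • u x - ‖w x‖ • w x, u x - w x⟫ := by
    intro x
    have h : (α x (u x) + β • (‖u x‖ • u x)) - (α x (w x) + β • (‖w x‖ • w x))
        = α x (u x - w x) + β • (‖u x‖ • u x - ‖w x‖ • w x) := by
      rw [map_sub]; module
    rw [hFdef]; simp only [h, inner_add_left, real_inner_smul_left]
  have hlow : ∀ᵐ x ∂μ,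
      αlow * ‖u x - w x‖ ^ 2 + (β / 2) * ‖u x - w x‖ ^ 3 ≤ F x := by
    filter_upwards [haeO] with x hx
    rw [hFeq]
    have h1 : αlow * ‖u x - w x‖ ^ 2 ≤ ⟪α x (u x - w x), u x - w x⟫ := by
      rw [real_inner_comm]; exact (hell x hx (u x - w x)).1
    have h2 : (1/2) * ‖u x - w x‖ ^ 3 ≤ ⟪‖u x‖ • u x - ‖w x‖ • w x, u x - w x⟫ :=
      aux_pointwise (u x) (w x)
    nlinarith [h2, hβ.le]
  have hbound : ∀ᵐ x ∂μ,
      ‖F x‖ ≤ αhigh * ‖u x - w x‖ ^ 2 + β * (‖u x‖ + ‖w x‖) ^ 3 := by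
    filter_upwards [haeO] with x hx
    rw [hFeq, Real.norm_eq_abs]
    have hq := hell x hx (u x - w x)
    have hq1 : |⟪α x (u x - w x), u x - w x⟫| ≤ αhigh * ‖u x - w x‖ ^ 2 := by
      rw [real_inner_comm, abs_le]
      constructor
      · nlinarith [hq.1, sq_nonneg ‖u x - w x‖, hαlow.le, hαle]
      · exact hq.2
    have hq2 : |⟪‖u x‖ • u x - ‖w x‖ • w x, u x - w x⟫| ≤ (‖u x‖ + ‖w x‖) ^ 3 := by
      calc |⟪‖u x‖ • u x - ‖w x‖ • w x, u x - w x⟫|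
          ≤ ‖‖u x‖ • u x - ‖w x‖ • w x‖ * ‖u x - w x‖ := abs_real_inner_le_norm _ _
        _ ≤ (‖u x‖ ^ 2 + ‖w x‖ ^ 2) * (‖u x‖ + ‖w x‖) := by
            refine mul_le_mul ?_ (norm_sub_le _ _) (norm_nonneg _) (by positivity)
            refine (norm_sub_le _ _).trans ?_
            simp only [norm_smul, Real.norm_eq_abs, abs_norm]
            nlinarith [norm_nonneg (u x), norm_nonneg (w x)]
        _ ≤ (‖u x‖ + ‖w x‖) ^ 3 := by nlinarith [norm_nonneg (u x), norm_nonneg (w x)]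
    calc |⟪α x (u x - w x), u x - w x⟫ + β * ⟪‖u x‖ • u x - ‖w x‖ • w x, u x - w x⟫|
        ≤ |⟪α x (u x - w x), u x - w x⟫| + |β * ⟪‖u x‖ • u x - ‖w x‖ • w x, u x - w x⟫| :=
          abs_add_le _ _
      _ ≤ αhigh * ‖u x - w x‖ ^ 2 + β * (‖u x‖ + ‖w x‖) ^ 3 := by
          rw [abs_mul, abs_of_pos hβ]
          exact add_le_add hq1 (mul_le_mul_of_nonneg_left hq2 hβ.le)
  -- integrability of F
  have hFi : Integrable F μ :=
    ((hi2.const_mul αhigh).add (hiG.const_mul β)).mono' hFm hbound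
  -- lower integrable function
  have hgi : Integrable (fun x => αlow * ‖u x - w x‖ ^ 2 + (β / 2) * ‖u x - w x‖ ^ 3) μ :=
    (hi2.const_mul αlow).add (hi3.const_mul (β / 2))
  have hint : ∫ x, (αlow * ‖u x - w x‖ ^ 2 + (β / 2) * ‖u x - w x‖ ^ 3) ∂μ ≤ ∫ x, F x ∂μ :=
    integral_mono_ae hgi hFi hlow
  have hsplit : ∫ x, (αlow * ‖u x - w x‖ ^ 2 + (β / 2) * ‖u x - w x‖ ^ 3) ∂μ
      = αlow * ∫ x, ‖u x - w x‖ ^ 2 ∂μ + (β / 2) * ∫ x, ‖u x - w x‖ ^ 3 ∂μ := by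
    rw [integral_add (hi2.const_mul αlow) (hi3.const_mul (β / 2)),
      integral_const_mul, integral_const_mul]
  have he2 : (eLpNorm (u - w) 2 μ).toReal ^ 2 = ∫ x, ‖u x - w x‖ ^ 2 ∂μ := by
    have := aux_eLp_pow (f := u - w) (n := 2) (by norm_num) (by rwa [h23])
    rw [h23] at this
    rw [this]
    exact integral_congr_ae (Filter.Eventually.of_forall fun x => by simp [Pi.sub_apply])
  have he3 : (eLpNorm (u - w) 3 μ).toReal ^ 3 = ∫ x, ‖u x - w x‖ ^ 3 ∂μ := by
    have := aux_eLp_pow (f := u - w) (n := 3) (by norm_num) (by rwa [h33])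
    rw [h33] at this
    rw [this]
    exact integral_congr_ae (Filter.Eventually.of_forall fun x => by simp [Pi.sub_apply])
  have hmain : αlow * (eLpNorm (u - w) 2 μ).toReal ^ 2
      + (β / 2) * (eLpNorm (u - w) 3 μ).toReal ^ 3 ≤ ∫ x, F x ∂μ := by
    rw [he2, he3]; rw [hsplit] at hint; exact hint
  refine ⟨hmain, fun hzero => ?_⟩
  have h3nn : 0 ≤ (eLpNorm (u - w) 3 μ).toReal := ENNReal.toReal_nonneg
  have h2nn : 0 ≤ (eLpNorm (u - w) 2 μ).toReal := ENNReal.toReal_nonneg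
  rw [hzero] at hmain
  have hc : (eLpNorm (u - w) 3 μ).toReal ^ 3 = 0 := by
    refine le_antisymm ?_ (pow_nonneg h3nn 3)
    nlinarith [mul_nonneg hαlow.le (sq_nonneg (eLpNorm (u - w) 2 μ).toReal), hβ]
  have h3z : (eLpNorm (u - w) 3 μ).toReal = 0 := by
    exact pow_eq_zero_iff (by norm_num) |>.1 hc
  have h3z' : eLpNorm (u - w) 3 μ = 0 := by
    rcases (ENNReal.toReal_eq_zero_iff _).1 h3z with h | h
    · exact h
    · exact absurd h huw3.2.ne
  have := (eLpNorm_eq_zero_iff huw3.1 (by norm_num)).1 h3z'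
  filter_upwards [this] with x hx
  have : u x - w x = 0 := hx
  exact sub_eq_zero.1 this
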